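/- arXiv:0712.4282 — 3 statements merged into one kernel-verified Lean document; each statement's English description precedes it below -/
import Mathlib

section
/- Let f : ℝⁿ → ℝ be a C¹ function with ∇f ≠ 0 everywhere that is a weak subsolution of the 1-harmonic equation with constant 1-tension field c ≥ 0, i.e., for every nonnegative Lipschitz function ψ with compact support, ∫ ⟨∇f/|∇f|, ∇ψ⟩ dx = −c ∫ ψ dx. Then c = 0; that is, f is 1-harmonic. -/
open MeasureTheory RealInnerProductSpace Metric

/-- Norm bound on the (junk-extended) gradient of a Lipschitz function. -/
theorem aux_norm_gradient_le {n : ℕ} (ψ : EuclideanSpace ℝ (Fin n) → ℝ) {L : NNReal}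
    (h : LipschitzWith L ψ) (x : EuclideanSpace ℝ (Fin n)) : ‖gradient ψ x‖ ≤ L := by
  rw [gradient, LinearIsometryEquiv.norm_map]
  by_cases hd : DifferentiableAt ℝ ψ x
  · exact norm_fderiv_le_of_lipschitz ℝ h
  · rw [fderiv_zero_of_not_differentiableAt hd]; simp

theorem aux_gradient_zero {n : ℕ} (ψ : EuclideanSpace ℝ (Fin n) → ℝ) (r : ℝ)
    (h : ∀ y ∈ (closedBall (0 : EuclideanSpace ℝ (Fin n)) r)ᶜ, ψ y = 0)
    {x : EuclideanSpace ℝ (Fin n)}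
    (hx : x ∉ closedBall (0 : EuclideanSpace ℝ (Fin n)) r) : gradient ψ x = 0 := by
  have : ψ =ᶠ[nhds x] fun _ => 0 := by
    filter_upwards [isOpen_compl_iff.2 isClosed_closedBall |>.mem_nhds hx] with y hy using h y hy
  rw [gradient, Filter.EventuallyEq.fderiv_eq this, fderiv_fun_const]
  simp

/-- An entire C¹ weak subsolution of the 1-harmonic equation with constant
1-tension field `c ≥ 0` must have `c = 0`, i.e. it is 1-harmonic. -/
theorem one_tension_constant_eq_zero (n : ℕ) (f : EuclideanSpace ℝ (Fin n) → ℝ)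
    (c : ℝ) (hc : 0 ≤ c)
    (hf : ContDiff ℝ 1 f) (hf0 : ∀ x, gradient f x ≠ 0)
    (hweak : ∀ ψ : EuclideanSpace ℝ (Fin n) → ℝ,
      (∃ L, LipschitzWith L ψ) → HasCompactSupport ψ → (∀ x, 0 ≤ ψ x) →
      ∫ x, ⟪(‖gradient f x‖)⁻¹ • gradient f x, gradient ψ x⟫ = - (c * ∫ x, ψ x)) :
    c = 0 := by
  set v1 : ℝ := (volume (closedBall (0 : EuclideanSpace ℝ (Fin n)) 1)).toReal with hv1def
  have hv1pos : 0 < v1 := by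
    refine ENNReal.toReal_pos (measure_closedBall_pos volume _ one_pos).ne' ?_
    exact (measure_closedBall_lt_top).ne
  have hvol : ∀ r : ℝ, 0 ≤ r →
      (volume (closedBall (0 : EuclideanSpace ℝ (Fin n)) r)).toReal = r ^ n * v1 := by
    intro r hr
    rw [Measure.addHaar_closedBall' volume 0 hr, finrank_euclideanSpace_fin,
      ENNReal.toReal_mul, ENNReal.toReal_ofReal (pow_nonneg hr n)]
  -- the key ball estimate
  have key : ∀ r : ℝ, 0 < r → c * r ≤ 2 ^ (n + 1) := by
    intro r hr
    set ψ : EuclideanSpace ℝ (Fin n) → ℝ := fun x => max (r - ‖x‖) 0 with hψdef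
    have hLip : LipschitzWith 1 ψ := by
      have h0 : LipschitzWith 1 fun t : ℝ => r - t := by
        have : Isometry (fun t : ℝ => r - t) := Isometry.of_dist_eq fun a b => by
          rw [Real.dist_eq, Real.dist_eq, show r - a - (r - b) = b - a by ring, abs_sub_comm]
        exact this.lipschitz
      have hnorm : LipschitzWith 1 fun x : EuclideanSpace ℝ (Fin n) => ‖x‖ :=
        lipschitzWith_one_norm
      have := (h0.comp hnorm).max_const 0
      simpa using this
    have hzero : ∀ y ∈ (closedBall (0 : EuclideanSpace ℝ (Fin n)) r)ᶜ, ψ y = 0 := by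
      intro y hy
      simp only [Set.mem_compl_iff, mem_closedBall, dist_zero_right, not_le] at hy
      simp [hψdef, le_of_lt, sub_nonpos, hy.le]
    have hsupp : HasCompactSupport ψ := by
      apply HasCompactSupport.intro (isCompact_closedBall (0 : EuclideanSpace ℝ (Fin n)) r)
      intro y hy; exact hzero y hy
    have hpos : ∀ x, 0 ≤ ψ x := fun x => le_max_right _ _
    -- gradient bound
    have hgψ : ∀ x, ‖gradient ψ x‖ ≤ 1 := by
      intro x; simpa using aux_norm_gradient_le ψ hLip x
    have hgψ0 : ∀ x ∉ closedBall (0 : EuclideanSpace ℝ (Fin n)) r, gradient ψ x = 0 :=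
      fun x hx => aux_gradient_zero ψ r hzero hx
    set g : EuclideanSpace ℝ (Fin n) → ℝ :=
      fun x => ⟪(‖gradient f x‖)⁻¹ • gradient f x, gradient ψ x⟫ with hgdef
    -- pointwise bound on g
    have hgbd : ∀ x, |g x| ≤
        (closedBall (0 : EuclideanSpace ℝ (Fin n)) r).indicator (fun _ => (1:ℝ)) x := by
      intro x
      by_cases hx : x ∈ closedBall (0 : EuclideanSpace ℝ (Fin n)) r
      · rw [Set.indicator_of_mem hx]
        calc |g x| ≤ ‖(‖gradient f x‖)⁻¹ • gradient f x‖ * ‖gradient ψ x‖ :=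
              abs_real_inner_le_norm _ _
          _ ≤ 1 * 1 := by
              apply mul_le_mul _ (hgψ x) (norm_nonneg _) zero_le_one
              rw [norm_smul, norm_inv, norm_norm,
                inv_mul_cancel₀ (norm_ne_zero_iff.2 (hf0 x))]
          _ = 1 := one_mul 1
      · rw [Set.indicator_of_notMem hx]
        simp only [hgdef, hgψ0 x hx, inner_zero_right, abs_zero, le_refl]
    -- measurability of g
    have hVcont : Continuous fun x => (‖gradient f x‖)⁻¹ • gradient f x := by
      have hgradcont : Continuous fun x => gradient f x := by
        have := (hf.continuous_fderiv one_ne_zero)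
        exact ((InnerProductSpace.toDual ℝ (EuclideanSpace ℝ (Fin n))).symm.continuous).comp this
      exact (hgradcont.norm.inv₀ fun x => norm_ne_zero_iff.2 (hf0 x)).smul hgradcont
    have hgmeas : AEStronglyMeasurable g volume := by
      apply Measurable.aestronglyMeasurable
      apply Measurable.inner (hVcont.measurable)
      exact ((InnerProductSpace.toDual ℝ (EuclideanSpace ℝ (Fin n))).symm.continuous.measurable).comp
        (measurable_fderiv ℝ ψ)
    have hindint : Integrable
        ((closedBall (0 : EuclideanSpace ℝ (Fin n)) r).indicator (fun _ => (1:ℝ))) volume := by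
      rw [integrable_indicator_iff measurableSet_closedBall]
      exact integrableOn_const measure_closedBall_lt_top.ne
    have hgint : Integrable g volume := by
      refine Integrable.mono' hindint hgmeas ?_
      filter_upwards with x
      simpa [Real.norm_eq_abs] using hgbd x
    have hψint : Integrable ψ volume :=
      hLip.continuous.integrable_of_hasCompactSupport hsupp
    -- apply the weak equation
    have heq := hweak ψ ⟨1, hLip⟩ hsupp hpos
    -- upper bound: c * ∫ ψ ≤ vol (closedBall r)
    have hub : c * ∫ x, ψ x ≤
        (volume (closedBall (0 : EuclideanSpace ℝ (Fin n)) r)).toReal := by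
      have h1 : c * ∫ x, ψ x = - ∫ x, g x := by rw [heq]; ring
      have h2 : |∫ x, g x| ≤ ∫ x,
          (closedBall (0 : EuclideanSpace ℝ (Fin n)) r).indicator (fun _ => (1:ℝ)) x := by
        calc |∫ x, g x| ≤ ∫ x, |g x| := by
              simpa [Real.norm_eq_abs] using norm_integral_le_integral_norm g
          _ ≤ _ := integral_mono hgint.abs hindint hgbd
      rw [h1]
      calc -∫ x, g x ≤ |∫ x, g x| := neg_le_abs _
        _ ≤ ∫ x, (closedBall (0 : EuclideanSpace ℝ (Fin n)) r).indicator (fun _ => (1:ℝ)) x := h2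
        _ = (volume (closedBall (0 : EuclideanSpace ℝ (Fin n)) r)).toReal := by
            rw [integral_indicator measurableSet_closedBall]
            simp [Measure.real]
    -- lower bound: ∫ ψ ≥ (r/2) * vol (closedBall (r/2))
    have hlb : (r / 2) * (volume (closedBall (0 : EuclideanSpace ℝ (Fin n)) (r / 2))).toReal
        ≤ ∫ x, ψ x := by
      have hptw : ∀ x,
          (closedBall (0 : EuclideanSpace ℝ (Fin n)) (r / 2)).indicator (fun _ => r / 2) x
            ≤ ψ x := by
        intro x
        by_cases hx : x ∈ closedBall (0 : EuclideanSpace ℝ (Fin n)) (r / 2)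
        · rw [Set.indicator_of_mem hx]
          simp only [mem_closedBall, dist_zero_right] at hx
          refine le_max_of_le_left ?_
          linarith
        · rw [Set.indicator_of_notMem hx]; exact hpos x
      have hind2 : Integrable
          ((closedBall (0 : EuclideanSpace ℝ (Fin n)) (r/2)).indicator (fun _ => r/2))
          volume := by
        rw [integrable_indicator_iff measurableSet_closedBall]
        exact integrableOn_const measure_closedBall_lt_top.ne
      calc (r / 2) * (volume (closedBall (0 : EuclideanSpace ℝ (Fin n)) (r / 2))).toReal
          = ∫ x, (closedBall (0 : EuclideanSpace ℝ (Fin n)) (r / 2)).indicator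
              (fun _ => r / 2) x := by
            rw [integral_indicator measurableSet_closedBall]
            simp [mul_comm, Measure.real]
        _ ≤ ∫ x, ψ x := integral_mono hind2 hψint hptw
    -- combine
    have hcomb : c * ((r / 2) * ((r / 2) ^ n * v1)) ≤ r ^ n * v1 := by
      rw [← hvol (r/2) (by linarith), ← hvol r hr.le]
      calc c * ((r / 2) * (volume (closedBall (0 : EuclideanSpace ℝ (Fin n)) (r / 2))).toReal)
          ≤ c * ∫ x, ψ x := mul_le_mul_of_nonneg_left hlb hc
        _ ≤ _ := hub
    have hrn : (0:ℝ) < r ^ n := pow_pos hr n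
    have h2n : ((2:ℝ) ^ n) ≠ 0 := (pow_pos two_pos n).ne'
    rw [div_pow r 2 n] at hcomb
    have e : 2 * (2:ℝ) ^ n * (c * ((r / 2) * (r ^ n / 2 ^ n * v1))) = (c * r * r ^ n) * v1 := by
      field_simp
    have h1 : (c * r * r ^ n) * v1 ≤ ((2:ℝ) ^ (n + 1) * r ^ n) * v1 := by
      calc (c * r * r ^ n) * v1 = 2 * (2:ℝ) ^ n * (c * ((r / 2) * (r ^ n / 2 ^ n * v1))) :=
            e.symm
        _ ≤ 2 * (2:ℝ) ^ n * (r ^ n * v1) :=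
            mul_le_mul_of_nonneg_left hcomb (by positivity)
        _ = ((2:ℝ) ^ (n + 1) * r ^ n) * v1 := by rw [pow_succ]; ring
    have h2 : (c * r) * r ^ n ≤ (2:ℝ) ^ (n + 1) * r ^ n :=
      le_of_mul_le_mul_right h1 hv1pos
    exact le_of_mul_le_mul_right h2 hrn
  -- conclude c = 0
  by_contra hne
  have hcpos : 0 < c := lt_of_le_of_ne hc (Ne.symm hne)
  have hr : (0:ℝ) < (2 ^ (n + 1) + 1) / c := by positivity
  have := key _ hr
  rw [mul_div_cancel₀ _ hcpos.ne'] at this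
  linarith
end

section
/- There does not exist a C¹ function f : ℝⁿ → ℝ with nowhere-vanishing gradient that is a weak solution of div(∇f/|∇f|) = g for a continuous function g ≥ 0 satisfying lim inf_{r → ∞} inf_{x ∈ B(x₀, r)} g(x) > 0 for some x₀ ∈ ℝⁿ. -/
open MeasureTheory Metric Filter RealInnerProductSpace

/-- There is no entire C¹ function with nowhere-vanishing gradient solving
`div(∇f/|∇f|) = g` weakly for a nonnegative continuous `g` whose infima over
large balls stay bounded away from `0`. -/
theorem no_one_harmonic_with_positive_tension (n : ℕ) :
    ¬ ∃ (f g : EuclideanSpace ℝ (Fin n) → ℝ) (x₀ : EuclideanSpace ℝ (Fin n)),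
      ContDiff ℝ 1 f ∧ (∀ x, gradient f x ≠ 0) ∧
      Continuous g ∧ (∀ x, 0 ≤ g x) ∧
      (∀ ψ : EuclideanSpace ℝ (Fin n) → ℝ,
        (∃ L, LipschitzWith L ψ) → HasCompactSupport ψ →
        ∫ x, ⟪(‖gradient f x‖)⁻¹ • gradient f x, gradient ψ x⟫ =
          - ∫ x, g x * ψ x) ∧
      0 < liminf (fun r : ℝ => sInf (g '' ball x₀ r)) atTop := by
  rintro ⟨f, g, x₀, hf, hfgrad, hgc, hg0, hweak, hliminf⟩
  rcases Nat.eq_zero_or_pos n with hn | hn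
  · exact hfgrad x₀ (by subst hn; exact Subsingleton.elim _ _)
  haveI : Nontrivial (EuclideanSpace ℝ (Fin n)) := by
    apply Module.nontrivial_of_finrank_pos (R := ℝ)
    rw [finrank_euclideanSpace_fin]; exact hn
  -- Step 1: g is bounded below by a positive constant
  have hbdd : ∀ r : ℝ, BddBelow (g '' ball x₀ r) := by
    rintro r
    exact ⟨0, by rintro _ ⟨y, -, rfl⟩; exact hg0 y⟩
  obtain ⟨c, hc, hgc'⟩ : ∃ c, 0 < c ∧ ∀ x, c ≤ g x := by
    set l := liminf (fun r : ℝ => sInf (g '' ball x₀ r)) atTop with hl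
    refine ⟨l / 2, half_pos hliminf, fun x => ?_⟩
    have hcb : IsBoundedUnder (· ≥ ·) atTop (fun r : ℝ => sInf (g '' ball x₀ r)) := by
      apply Filter.isBoundedUnder_of_eventually_ge (a := (0:ℝ))
      filter_upwards with r
      exact Real.sInf_nonneg (by rintro _ ⟨y, -, rfl⟩; exact hg0 y)
    have hev : ∀ᶠ r in atTop, l / 2 < sInf (g '' ball x₀ r) :=
      eventually_lt_of_lt_liminf (half_lt_self hliminf) hcb
    obtain ⟨r, hr1, hr2⟩ := (hev.and (eventually_ge_atTop (dist x x₀ + 1))).exists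
    have hx : x ∈ ball x₀ r := by rw [mem_ball]; linarith
    exact (hr1.trans_le (csInf_le (hbdd r) ⟨x, hx, rfl⟩)).le
  -- radius
  set R : ℝ := 2 * 2 ^ n / c with hRdef
  have hR0 : 0 < R := by positivity
  -- cutoff function
  set ψ : EuclideanSpace ℝ (Fin n) → ℝ :=
    fun x => max 0 (min 1 (2 - dist x x₀ / R)) with hψdef
  have hψ0 : ∀ x, 0 ≤ ψ x := fun x => le_max_left _ _
  have hψ1 : ∀ x, ψ x ≤ 1 := fun x => max_le zero_le_one (min_le_left _ _)
  have hψball : ∀ x ∈ ball x₀ R, ψ x = 1 := by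
    intro x hx
    rw [mem_ball] at hx
    have h1 : (1 : ℝ) ≤ 2 - dist x x₀ / R := by
      rw [le_sub_iff_add_le]
      have := (div_lt_one hR0).2 hx
      linarith
    simp [hψdef, min_eq_left h1]
  have hψout : ∀ x, 2 * R ≤ dist x x₀ → ψ x = 0 := by
    intro x hx
    have h1 : 2 - dist x x₀ / R ≤ 0 := by
      rw [sub_nonpos, le_div_iff₀ hR0]; linarith
    rw [hψdef]
    have : min 1 (2 - dist x x₀ / R) ≤ 0 := le_trans (min_le_right _ _) h1
    simp [max_eq_left this]
  have hψsupp : Function.support ψ ⊆ closedBall x₀ (2 * R) := by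
    intro x hx
    rw [Function.mem_support] at hx
    by_contra h
    rw [mem_closedBall, not_le] at h
    exact hx (hψout x h.le)
  have hψcompact : HasCompactSupport ψ :=
    HasCompactSupport.intro (isCompact_closedBall x₀ (2 * R))
      (fun x hx => by
        by_contra h
        exact hx (hψsupp (Function.mem_support.2 h)))
  have hψlip : LipschitzWith (Real.toNNReal R⁻¹) ψ := by
    apply LipschitzWith.of_dist_le_mul
    intro x y
    rw [Real.coe_toNNReal _ (by positivity : (0:ℝ) ≤ R⁻¹)]
    rw [Real.dist_eq, hψdef]
    calc |max 0 (min 1 (2 - dist x x₀ / R)) - max 0 (min 1 (2 - dist y x₀ / R))|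
        = |max (min 1 (2 - dist x x₀ / R)) 0 - max (min 1 (2 - dist y x₀ / R)) 0| := by
          rw [max_comm, max_comm (min 1 (2 - dist y x₀ / R))]
      _ ≤ |min 1 (2 - dist x x₀ / R) - min 1 (2 - dist y x₀ / R)| :=
          abs_max_sub_max_le_abs _ _ _
      _ ≤ max |(1:ℝ) - 1| |(2 - dist x x₀ / R) - (2 - dist y x₀ / R)| :=
          abs_min_sub_min_le_max _ _ _ _
      _ = |dist y x₀ / R - dist x x₀ / R| := by
          rw [sub_self, abs_zero]
          rw [max_eq_right (abs_nonneg _)]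
          ring_nf
      _ = |dist y x₀ - dist x x₀| / R := by rw [← sub_div, abs_div, abs_of_pos hR0]
      _ ≤ dist y x / R := by
          exact div_le_div_of_nonneg_right (abs_dist_sub_le y x x₀) hR0.le
      _ ≤ R⁻¹ * dist x y := by rw [dist_comm y x, div_eq_inv_mul]
  -- gradient bounds for ψ
  have hgradψ_le : ∀ x, ‖gradient ψ x‖ ≤ R⁻¹ := by
    intro x
    rw [gradient, LinearIsometryEquiv.norm_map]
    have := norm_fderiv_le_of_lipschitz ℝ (x₀ := x) hψlip
    rwa [Real.coe_toNNReal _ (by positivity)] at this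
  have hgradψ_zero : ∀ x, 2 * R < dist x x₀ → gradient ψ x = 0 := by
    intro x hx
    have hev : ψ =ᶠ[nhds x] (fun _ => (0 : ℝ)) := by
      have hopen : IsOpen {y : EuclideanSpace ℝ (Fin n) | 2 * R < dist y x₀} :=
        isOpen_lt continuous_const (continuous_id.dist continuous_const)
      filter_upwards [hopen.mem_nhds hx] with y hy
      exact hψout y (le_of_lt hy)
    rw [hev.gradient_eq]; exact gradient_const _ _
  -- the vector field has unit norm
  set X : EuclideanSpace ℝ (Fin n) → EuclideanSpace ℝ (Fin n) :=
    fun x => (‖gradient f x‖)⁻¹ • gradient f x with hXdef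
  have hXnorm : ∀ x, ‖X x‖ = 1 := by
    intro x
    rw [hXdef, norm_smul, norm_inv, norm_norm,
      inv_mul_cancel₀ (norm_ne_zero_iff.2 (hfgrad x))]
  -- integrability and bounds
  have key := hweak ψ ⟨_, hψlip⟩ hψcompact
  -- LHS bound
  have hLHS : |∫ x, ⟪X x, gradient ψ x⟫| ≤
      R⁻¹ * (volume (closedBall x₀ (2 * R))).toReal := by
    set bound : EuclideanSpace ℝ (Fin n) → ℝ :=
      (closedBall x₀ (2 * R)).indicator (fun _ => R⁻¹) with hbdef
    have hbound_int : Integrable bound := by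
      rw [hbdef, integrable_indicator_iff measurableSet_closedBall]
      exact integrableOn_const measure_closedBall_lt_top.ne
    have hptwise : ∀ x, ‖⟪X x, gradient ψ x⟫‖ ≤ bound x := by
      intro x
      by_cases hx : x ∈ closedBall x₀ (2 * R)
      · rw [hbdef, Set.indicator_of_mem hx]
        calc ‖⟪X x, gradient ψ x⟫‖ ≤ ‖X x‖ * ‖gradient ψ x‖ := norm_inner_le_norm _ _
          _ = ‖gradient ψ x‖ := by rw [hXnorm x, one_mul]
          _ ≤ R⁻¹ := hgradψ_le x
      · rw [hbdef, Set.indicator_of_notMem hx]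
        rw [mem_closedBall, not_le] at hx
        rw [hgradψ_zero x hx, inner_zero_right, norm_zero]
    have := norm_integral_le_of_norm_le hbound_int (Filter.Eventually.of_forall hptwise)
    rw [Real.norm_eq_abs] at this
    refine this.trans ?_
    rw [hbdef, integral_indicator_const _ measurableSet_closedBall, smul_eq_mul, mul_comm]; exact le_rfl
  -- RHS bound
  have hRHS : c * (volume (ball x₀ R)).toReal ≤ ∫ x, g x * ψ x := by
    have hgψint : Integrable (fun x => g x * ψ x) :=
      (hgc.mul hψlip.continuous).integrable_of_hasCompactSupport hψcompact.mul_left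
    have hφint : Integrable ((ball x₀ R).indicator (fun _ => c)) := by
      rw [integrable_indicator_iff measurableSet_ball]
      exact integrableOn_const measure_ball_lt_top.ne
    have hmono : ∀ x, (ball x₀ R).indicator (fun _ => c) x ≤ g x * ψ x := by
      intro x
      by_cases hx : x ∈ ball x₀ R
      · rw [Set.indicator_of_mem hx, hψball x hx, mul_one]
        exact hgc' x
      · rw [Set.indicator_of_notMem hx]
        exact mul_nonneg (hg0 x) (hψ0 x)
    calc c * (volume (ball x₀ R)).toReal
        = ∫ x, (ball x₀ R).indicator (fun _ => c) x := by
          rw [integral_indicator_const _ measurableSet_ball, smul_eq_mul, mul_comm]; rfl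
      _ ≤ ∫ x, g x * ψ x := integral_mono hφint hgψint hmono
  -- volumes
  have hV : 0 < (volume (ball (0 : EuclideanSpace ℝ (Fin n)) 1)).toReal := by
    refine ENNReal.toReal_pos (ne_of_gt (measure_ball_pos _ _ one_pos)) (ne_of_lt measure_ball_lt_top)
  have hvol1 : (volume (ball x₀ R)).toReal =
      R ^ n * (volume (ball (0 : EuclideanSpace ℝ (Fin n)) 1)).toReal := by
    rw [Measure.addHaar_ball _ _ hR0.le, ENNReal.toReal_mul,
      ENNReal.toReal_ofReal (by positivity), finrank_euclideanSpace_fin]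
  have hvol2 : (volume (closedBall x₀ (2 * R))).toReal =
      (2 * R) ^ n * (volume (ball (0 : EuclideanSpace ℝ (Fin n)) 1)).toReal := by
    rw [Measure.addHaar_closedBall _ _ (by positivity), ENNReal.toReal_mul,
      ENNReal.toReal_ofReal (by positivity), finrank_euclideanSpace_fin]
  -- contradiction
  have hchain : c * (volume (ball x₀ R)).toReal ≤
      R⁻¹ * (volume (closedBall x₀ (2 * R))).toReal := by
    calc c * (volume (ball x₀ R)).toReal ≤ ∫ x, g x * ψ x := hRHS
    _ = - ∫ x, ⟪X x, gradient ψ x⟫ := by rw [key]; ring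
    _ ≤ |∫ x, ⟪X x, gradient ψ x⟫| := by
        rw [abs_eq_max_neg]; exact le_max_right _ _
    _ ≤ _ := hLHS
  rw [hvol1, hvol2, mul_pow] at hchain
  have hRn : (0:ℝ) < R ^ n := by positivity
  have : c ≤ R⁻¹ * 2 ^ n := by
    have := mul_le_mul_of_nonneg_right hchain (le_of_lt (inv_pos.2 (mul_pos hRn hV)))
    calc c = c * (R ^ n * (volume (ball (0 : EuclideanSpace ℝ (Fin n)) 1)).toReal) *
        (R ^ n * (volume (ball (0 : EuclideanSpace ℝ (Fin n)) 1)).toReal)⁻¹ := by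
          field_simp
    _ ≤ R⁻¹ * (2 ^ n * R ^ n * (volume (ball (0 : EuclideanSpace ℝ (Fin n)) 1)).toReal) *
        (R ^ n * (volume (ball (0 : EuclideanSpace ℝ (Fin n)) 1)).toReal)⁻¹ := this
    _ = R⁻¹ * 2 ^ n := by field_simp
  have hRinv : R⁻¹ * 2 ^ n = c / 2 := by
    rw [hRdef]; field_simp
  rw [hRinv] at this
  linarith
end

section
/- Let f : ℝⁿ → ℝ be C¹ with ∇f ≠ 0 everywhere, and let g : ℝⁿ → ℝ be C¹ with compact support. If f is a weak solution of the 1-harmonic equation div(∇f/|∇f|) = 0 and ∇(f + t·g) ≠ 0 everywhere for all t ∈ [0,1], then for any bounded open set A containing the support of g, ∫_A |∇f| dx ≤ ∫_A |∇(f + g)| dx; that is, f has least gradient against C¹ perturbations. -/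
open MeasureTheory RealInnerProductSpace

lemma gradient_add' {F : Type*} [NormedAddCommGroup F] [InnerProductSpace ℝ F]
    [CompleteSpace F] {f g : F → ℝ} {x : F} (hf : DifferentiableAt ℝ f x)
    (hg : DifferentiableAt ℝ g x) :
    gradient (fun y => f y + g y) x = gradient f x + gradient g x := by
  unfold gradient
  rw [fderiv_fun_add hf hg, map_add]

lemma continuous_gradient {F : Type*} [NormedAddCommGroup F] [InnerProductSpace ℝ F]
    [CompleteSpace F] {f : F → ℝ} (hf : ContDiff ℝ 1 f) :
    Continuous (gradient f) := by
  have : Continuous (fderiv ℝ f) := hf.continuous_fderiv one_ne_zero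
  exact ((InnerProductSpace.toDual ℝ F).symm.continuous).comp this

lemma gradient_eq_zero_of_not_mem_tsupport {F : Type*} [NormedAddCommGroup F]
    [InnerProductSpace ℝ F] [CompleteSpace F] {f : F → ℝ} {x : F} (h : x ∉ tsupport f) :
    gradient f x = 0 := by
  unfold gradient
  have : fderiv ℝ f x = 0 := by
    by_contra hne
    exact h (support_fderiv_subset ℝ (Function.mem_support.mpr hne))
  rw [this, map_zero]

/-- A C¹ weak solution of the 1-harmonic equation has least gradient against
C¹ compactly supported perturbations. -/
theorem one_harmonic_least_gradient (n : ℕ) (f g : EuclideanSpace ℝ (Fin n) → ℝ)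
    (hf : ContDiff ℝ 1 f) (hf0 : ∀ x, gradient f x ≠ 0)
    (hg : ContDiff ℝ 1 g) (hgc : HasCompactSupport g)
    (hweak : ∀ φ : EuclideanSpace ℝ (Fin n) → ℝ,
      ContDiff ℝ 1 φ → HasCompactSupport φ →
      ∫ x, ⟪(‖gradient f x‖)⁻¹ • gradient f x, gradient φ x⟫ = 0)
    (hnz : ∀ t ∈ Set.Icc (0 : ℝ) 1, ∀ x, gradient (fun y => f y + t * g y) x ≠ 0)
    (A : Set (EuclideanSpace ℝ (Fin n))) (hA : IsOpen A)
    (hAb : Bornology.IsBounded A) (hsupp : tsupport g ⊆ A) :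
    ∫ x in A, ‖gradient f x‖ ≤ ∫ x in A, ‖gradient (fun y => f y + g y) x‖ := by
  set u : EuclideanSpace ℝ (Fin n) → EuclideanSpace ℝ (Fin n) := gradient f with hu
  set G : EuclideanSpace ℝ (Fin n) → EuclideanSpace ℝ (Fin n) := gradient g with hG
  have hcu : Continuous u := continuous_gradient hf
  have hcG : Continuous G := continuous_gradient hg
  -- the unit vector field
  set N : EuclideanSpace ℝ (Fin n) → EuclideanSpace ℝ (Fin n) :=
    fun x => (‖u x‖)⁻¹ • u x with hN
  have hcN : Continuous N := by
    exact (hcu.norm.inv₀ (fun x => norm_ne_zero_iff.mpr (hf0 x))).smul hcu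
  have hNnorm : ∀ x, ‖N x‖ = 1 := by
    intro x
    rw [hN, norm_smul, norm_inv, norm_norm,
      inv_mul_cancel₀ (norm_ne_zero_iff.mpr (hf0 x))]
  -- gradient of the sum
  have hgradsum : ∀ x, gradient (fun y => f y + g y) x = u x + G x := fun x =>
    gradient_add' (hf.differentiable one_ne_zero x) (hg.differentiable one_ne_zero x)
  -- pointwise inequality
  have hpt : ∀ x, ‖u x‖ + ⟪N x, G x⟫ ≤ ‖u x + G x‖ := by
    intro x
    have h1 : ⟪N x, u x + G x⟫ = ‖u x‖ + ⟪N x, G x⟫ := by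
      rw [inner_add_right, hN]
      have : ⟪(‖u x‖)⁻¹ • u x, u x⟫ = ‖u x‖ := by
        rw [real_inner_smul_left, real_inner_self_eq_norm_sq]
        field_simp [norm_ne_zero_iff.mpr (hf0 x)]
      rw [this]
    calc ‖u x‖ + ⟪N x, G x⟫ = ⟪N x, u x + G x⟫ := h1.symm
      _ ≤ ‖N x‖ * ‖u x + G x‖ := real_inner_le_norm _ _
      _ = ‖u x + G x‖ := by rw [hNnorm x, one_mul]
  -- integrability on A
  have hAcc : IsCompact (closure A) := hAb.isCompact_closure
  have int1 : IntegrableOn (fun x => ‖u x‖) A volume :=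
    (hcu.norm.continuousOn.integrableOn_compact hAcc).mono_set subset_closure
  have int2 : IntegrableOn (fun x => ⟪N x, G x⟫) A volume :=
    ((hcN.inner hcG).continuousOn.integrableOn_compact hAcc).mono_set subset_closure
  have int3 : IntegrableOn (fun x => ‖u x + G x‖) A volume :=
    ((hcu.add hcG).norm.continuousOn.integrableOn_compact hAcc).mono_set subset_closure
  -- the middle term integrates to zero
  have hzero : ∫ x in A, ⟪N x, G x⟫ = 0 := by
    have hext : ∫ x in A, ⟪N x, G x⟫ = ∫ x, ⟪N x, G x⟫ := by
      apply setIntegral_eq_integral_of_forall_compl_eq_zero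
      intro x hx
      have : G x = 0 := gradient_eq_zero_of_not_mem_tsupport (fun h => hx (hsupp h))
      rw [this, inner_zero_right]
    rw [hext]
    exact hweak g hg hgc
  -- conclude
  have key : (∫ x in A, ‖u x‖) + ∫ x in A, ⟪N x, G x⟫ ≤ ∫ x in A, ‖u x + G x‖ := by
    rw [← integral_add int1 int2]
    exact setIntegral_mono (int1.add int2) int3 (fun x => hpt x)
  have hrw : ∫ x in A, ‖gradient (fun y => f y + g y) x‖ = ∫ x in A, ‖u x + G x‖ := by
    congr 1
    ext x
    rw [hgradsum x]
  rw [hrw]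
  calc ∫ x in A, ‖u x‖ = (∫ x in A, ‖u x‖) + ∫ x in A, ⟪N x, G x⟫ := by rw [hzero, add_zero]
    _ ≤ ∫ x in A, ‖u x + G x‖ := key
end
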